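/- Let E > 0 and a ≠ 0, and let (P,L) ∈ ℝ³ × ℝ³ satisfy |P|² = 2E and P·L = 0. Then there exists β ∈ ℝ such that the Hamiltonian vector fields of G and L_z are parallel at (P,L), i.e. -2 P × L - β (P × e_z) = 0 and -2a² P₃ (P × e_z) - β (L × e_z) = 0, if and only if either (P = (0,0,√(2E)) or P = (0,0,-√(2E))) and L = (0,0,0), or P₃ = 0 and L₁ = L₂ = 0. That is, the critical points of the momentum map (L_z, G) on T*S² are exactly the two poles with zero angular momentum (the focus-focus points) and the points over the equator of the momentum sphere with L parallel to the z-axis. -/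
import Mathlib


noncomputable section

/-- The cross product in `ℝ³`. -/
def cross3 (v w : Fin 3 → ℝ) : Fin 3 → ℝ :=
  ![v 1 * w 2 - v 2 * w 1, v 2 * w 0 - v 0 * w 2, v 0 * w 1 - v 1 * w 0]

/-- The dot product in `ℝ³`. -/
def dot3 (v w : Fin 3 → ℝ) : ℝ := v 0 * w 0 + v 1 * w 1 + v 2 * w 2

/-- The unit vector `e_z = (0,0,1)`. -/
def ez : Fin 3 → ℝ := ![0, 0, 1]

/-- Critical points of the momentum map `(L_z, G)` on `T*S²`: for `E > 0`, `a ≠ 0`,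
`|P|² = 2E`, `P·L = 0`, the Hamiltonian vector fields of `G` (namely
`(-2P×L, -2a²P₃(P×e_z))`) and of `L_z` (namely `(-P×e_z, -L×e_z)`) are parallel
for some `β ∈ ℝ` iff either `P = (0,0,±√(2E))` and `L = 0` (the focus-focus
points), or `P₃ = 0` and `L₁ = L₂ = 0` (the equator points with `L ∥ e_z`). -/
theorem critical_points_momentum_map (E a : ℝ) (hE : 0 < E) (ha : a ≠ 0)
    (P L : Fin 3 → ℝ) (hP : dot3 P P = 2 * E) (hPL : dot3 P L = 0) :
    (∃ β : ℝ,
        (-2 : ℝ) • cross3 P L - β • cross3 P ez = 0 ∧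
        (-(2 * a ^ 2 * P 2)) • cross3 P ez - β • cross3 L ez = 0) ↔
      (((P = ![0, 0, Real.sqrt (2 * E)] ∨ P = ![0, 0, -Real.sqrt (2 * E)]) ∧ L = 0) ∨
        (P 2 = 0 ∧ L 0 = 0 ∧ L 1 = 0)) := by
  simp only [dot3] at hP hPL
  have ha2 : 0 < a ^ 2 := by positivity
  constructor
  · rintro ⟨β, h1, h2⟩
    have e1 := congrFun h1 0
    have e2 := congrFun h1 1
    have e3 := congrFun h1 2
    have f1 := congrFun h2 0
    have f2 := congrFun h2 1
    simp only [cross3, ez, Pi.sub_apply, Pi.smul_apply, smul_eq_mul, Pi.zero_apply,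
      Matrix.cons_val_zero, Matrix.cons_val_one, Matrix.head_cons, Matrix.cons_val_two,
      Matrix.tail_cons, mul_one, mul_zero, sub_zero, zero_sub, mul_neg] at e1 e2 e3 f1 f2
    by_cases hp2 : P 2 = 0
    · right
      refine ⟨hp2, ?_, ?_⟩
      · by_cases hβ : β = 0
        · subst hβ
          have hpp : (0:ℝ) < P 0 ^ 2 + P 1 ^ 2 := by nlinarith
          have key : L 0 * (P 0 ^ 2 + P 1 ^ 2) = 0 := by
            linear_combination P 0 * hPL + (P 1 / 2) * e3 - (P 0 * L 2) * hp2
          rcases mul_eq_zero.mp key with h | h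
          · exact h
          · exact absurd h (ne_of_gt hpp)
        · have h : β * L 0 = 0 := by
            linear_combination f2 - (2 * a ^ 2 * P 0) * hp2
          exact (mul_eq_zero.mp h).resolve_left hβ
      · by_cases hβ : β = 0
        · subst hβ
          have hpp : (0:ℝ) < P 0 ^ 2 + P 1 ^ 2 := by nlinarith
          have key : L 1 * (P 0 ^ 2 + P 1 ^ 2) = 0 := by
            linear_combination P 1 * hPL - (P 0 / 2) * e3 - (P 1 * L 2) * hp2
          rcases mul_eq_zero.mp key with h | h
          · exact h
          · exact absurd h (ne_of_gt hpp)
        · have h : β * L 1 = 0 := by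
            linear_combination -f1 - (2 * a ^ 2 * P 1) * hp2
          exact (mul_eq_zero.mp h).resolve_left hβ
    · left
      have hne : 2 * a ^ 2 * P 2 ≠ 0 :=
        mul_ne_zero (mul_ne_zero two_ne_zero (ne_of_gt ha2)) hp2
      have hmain : P 0 = 0 ∧ P 1 = 0 ∧ L 0 = 0 ∧ L 1 = 0 ∧ L 2 = 0 := by
        by_cases hβ : β = 0
        · subst hβ
          have hP1 : P 1 = 0 := by
            have h : (2 * a ^ 2 * P 2) * P 1 = 0 := by linear_combination -f1
            exact (mul_eq_zero.mp h).resolve_left hne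
          have hP0 : P 0 = 0 := by
            have h : (2 * a ^ 2 * P 2) * P 0 = 0 := by linear_combination f2
            exact (mul_eq_zero.mp h).resolve_left hne
          have hL1 : L 1 = 0 := by
            have h : P 2 * L 1 = 0 := by linear_combination (1/2) * e1 + L 2 * hP1
            exact (mul_eq_zero.mp h).resolve_left hp2
          have hL0 : L 0 = 0 := by
            have h : P 2 * L 0 = 0 := by linear_combination (-1/2) * e2 + L 2 * hP0
            exact (mul_eq_zero.mp h).resolve_left hp2
          have hL2 : L 2 = 0 := by
            have h : P 2 * L 2 = 0 := by
              linear_combination hPL - L 0 * hP0 - L 1 * hP1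
            exact (mul_eq_zero.mp h).resolve_left hp2
          exact ⟨hP0, hP1, hL0, hL1, hL2⟩
        · have hl0β : β * L 0 = -(2 * a ^ 2 * P 2 * P 0) := by linear_combination f2
          have hl1β : β * L 1 = -(2 * a ^ 2 * P 2 * P 1) := by linear_combination -f1
          have hl2β : β * L 2 = 2 * a ^ 2 * (P 0 ^ 2 + P 1 ^ 2) := by
            have h : P 2 * (β * L 2 - 2 * a ^ 2 * (P 0 ^ 2 + P 1 ^ 2)) = 0 := by
              linear_combination β * hPL - P 0 * hl0β - P 1 * hl1β
            have := (mul_eq_zero.mp h).resolve_left hp2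
            linarith
          have hposc : (0:ℝ) < 8 * a ^ 2 * E + β ^ 2 := by nlinarith [sq_nonneg β]
          have hP0 : P 0 = 0 := by
            have h : P 0 * (8 * a ^ 2 * E + β ^ 2) = 0 := by
              linear_combination β * e2 + 2 * P 2 * hl0β - 2 * P 0 * hl2β - 4 * a ^ 2 * P 0 * hP
            exact (mul_eq_zero.mp h).resolve_right (ne_of_gt hposc)
          have hP1 : P 1 = 0 := by
            have h : P 1 * (8 * a ^ 2 * E + β ^ 2) = 0 := by
              linear_combination -β * e1 + 2 * P 2 * hl1β - 2 * P 1 * hl2β - 4 * a ^ 2 * P 1 * hP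
            exact (mul_eq_zero.mp h).resolve_right (ne_of_gt hposc)
          have hL0 : L 0 = 0 := by
            have h : β * L 0 = 0 := by rw [hl0β, hP0]; ring
            exact (mul_eq_zero.mp h).resolve_left hβ
          have hL1 : L 1 = 0 := by
            have h : β * L 1 = 0 := by rw [hl1β, hP1]; ring
            exact (mul_eq_zero.mp h).resolve_left hβ
          have hL2 : L 2 = 0 := by
            have h : β * L 2 = 0 := by rw [hl2β, hP0, hP1]; ring
            exact (mul_eq_zero.mp h).resolve_left hβ
          exact ⟨hP0, hP1, hL0, hL1, hL2⟩
      obtain ⟨hp0, hp1, hl0, hl1, hl2⟩ := hmain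
      have hL : L = 0 := by
        funext i; fin_cases i <;> simp [hl0, hl1, hl2]
      refine ⟨?_, hL⟩
      have hs : Real.sqrt (2 * E) ^ 2 = 2 * E := Real.sq_sqrt (by linarith)
      have h22 : (P 2 - Real.sqrt (2 * E)) * (P 2 + Real.sqrt (2 * E)) = 0 := by
        linear_combination hP - hs - P 0 * hp0 - P 1 * hp1
      have hview : P = ![P 0, P 1, P 2] := by
        funext i; fin_cases i <;> rfl
      rcases mul_eq_zero.mp h22 with h | h
      · left; rw [hview, hp0, hp1, show P 2 = Real.sqrt (2 * E) by linarith]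
      · right; rw [hview, hp0, hp1, show P 2 = -Real.sqrt (2 * E) by linarith]
  · rintro (⟨(hP' | hP'), hL⟩ | ⟨hp2, hl0, hl1⟩)
    · subst hP' hL
      exact ⟨0, by funext i; fin_cases i <;> simp [cross3, ez],
        by funext i; fin_cases i <;> simp [cross3, ez]⟩
    · subst hP' hL
      exact ⟨0, by funext i; fin_cases i <;> simp [cross3, ez],
        by funext i; fin_cases i <;> simp [cross3, ez]⟩
    · refine ⟨-2 * L 2, ?_, ?_⟩
      · funext i; fin_cases i <;> simp [cross3, ez, hp2, hl0, hl1] <;> ring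
      · funext i; fin_cases i <;> simp [cross3, ez, hp2, hl0, hl1]
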